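/- Let X be a complex Banach space, S a bounded linear operator on X, x* ∈ X* a nonzero continuous linear functional, and U = {y ∈ X : Re(x*(y)) > 0 and Re(x*(S(y))) < 0}. Suppose there exists x ∈ U such that liminf_{k→∞} #(N_S(x,U) ∩ [0,k]) / (k+1) > 0, where N_S(x,U) = {n ∈ ℕ : S^n(x) ∈ U}. Then S − I is not quasinilpotent, i.e. the spectral radius of S − I is nonzero. -/

import Mathlib

open Filter Finset
open scoped ENNReal NNReal

/-- Zero counting via a Blaschke-type argument: an entire function bounded by `M` on the
ball of radius `4*R`, with `m` distinct zeros in the closed ball of radius `R`, satisfies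
`‖g 0‖ * 3 ^ m ≤ M`. -/
lemma zero_count {R : ℝ} (hR : 0 < R) :
    ∀ (m : ℕ) (g : ℂ → ℂ) (M : ℝ), Differentiable ℂ g →
    ∀ s : Finset ℂ, s.card = m → (∀ w ∈ s, g w = 0 ∧ ‖w‖ ≤ R) →
    (∀ z : ℂ, ‖z‖ ≤ 4 * R → ‖g z‖ ≤ M) → ‖g 0‖ * 3 ^ m ≤ M := by
  intro m
  induction m with
  | zero =>
    intro g M hg s hcard hs hM
    simpa using hM 0 (by simp; positivity)
  | succ m ih =>
    intro g M hg s hcard hs hM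
    have hpos : 0 < s.card := by omega
    obtain ⟨w, hw⟩ := Finset.card_pos.mp hpos
    obtain ⟨hgw, hwR⟩ := hs w hw
    set h : ℂ → ℂ := dslope g w with hh
    have hdiff : Differentiable ℂ h := by
      have := (Complex.differentiableOn_dslope (c := w) (s := (Set.univ : Set ℂ))
        Filter.univ_mem).mpr hg.differentiableOn
      exact differentiableOn_univ.mp this
    have hfact : ∀ z : ℂ, g z = (z - w) * h z := by
      intro z
      have := sub_smul_dslope g w z
      rw [hgw, sub_zero] at this
      rw [← this, smul_eq_mul]
    -- bound h on the ball of radius 4R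
    have hMnonneg : 0 ≤ M := le_trans (norm_nonneg _) (hM 0 (by simp; positivity))
    have hhM : ∀ z : ℂ, ‖z‖ ≤ 4 * R → ‖h z‖ ≤ M / (3 * R) := by
      have hfr : ∀ z ∈ frontier (Metric.ball (0:ℂ) (4 * R)), ‖h z‖ ≤ M / (3 * R) := by
        intro z hz
        rw [frontier_ball (0:ℂ) (by positivity : (4:ℝ) * R ≠ 0)] at hz
        have hznorm : ‖z‖ = 4 * R := by simpa using hz
        have h1 : 3 * R ≤ ‖z - w‖ := by
          have := norm_sub_norm_le z w
          have h2 : ‖z‖ - ‖w‖ ≤ ‖z - w‖ := norm_sub_norm_le z w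
          linarith
        have h3 : ‖z - w‖ * ‖h z‖ ≤ M := by
          rw [← norm_mul, ← hfact z]; exact hM z (le_of_eq hznorm)
        rw [le_div_iff₀ (by positivity)]
        calc ‖h z‖ * (3 * R) ≤ ‖h z‖ * ‖z - w‖ := by
              apply mul_le_mul_of_nonneg_left h1 (norm_nonneg _)
          _ ≤ M := by rw [mul_comm]; exact h3
      intro z hz
      have hcl : z ∈ closure (Metric.ball (0:ℂ) (4 * R)) := by
        rw [closure_ball (0:ℂ) (by positivity : (4:ℝ) * R ≠ 0)]
        simpa [Metric.mem_closedBall, dist_eq_norm] using hz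
      exact Complex.norm_le_of_forall_mem_frontier_norm_le Metric.isBounded_ball
        hdiff.diffContOnCl hfr hcl
    -- zeros of h
    have hscard : (s.erase w).card = m := by
      rw [Finset.card_erase_of_mem hw, hcard]; omega
    have hszero : ∀ w' ∈ s.erase w, h w' = 0 ∧ ‖w'‖ ≤ R := by
      intro w' hw'
      obtain ⟨hne, hw's⟩ := Finset.mem_erase.mp hw'
      obtain ⟨hg0, hle⟩ := hs w' hw's
      refine ⟨?_, hle⟩
      have := hfact w'
      rw [hg0] at this
      rcases mul_eq_zero.mp this.symm with h1 | h1
      · exact absurd (sub_eq_zero.mp h1) hne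
      · exact h1
    have ihh := ih h (M / (3 * R)) hdiff (s.erase w) hscard hszero hhM
    -- conclude
    have hg0 : ‖g 0‖ ≤ R * ‖h 0‖ := by
      rw [hfact 0, norm_mul, zero_sub, norm_neg]
      exact mul_le_mul_of_nonneg_right hwR (norm_nonneg _)
    calc ‖g 0‖ * 3 ^ (m + 1) = (‖g 0‖ * 3 ^ m) * 3 := by ring
      _ ≤ (R * ‖h 0‖ * 3 ^ m) * 3 := by
          have : ‖g 0‖ * 3 ^ m ≤ R * ‖h 0‖ * 3 ^ m :=
            mul_le_mul_of_nonneg_right hg0 (by positivity)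
          linarith
      _ = 3 * R * (‖h 0‖ * 3 ^ m) := by ring
      _ ≤ 3 * R * (M / (3 * R)) := by
          apply mul_le_mul_of_nonneg_left ihh (by positivity)
      _ = M := by field_simp

noncomputable def pp (k : ℕ) (z : ℂ) : ℂ :=
  (∏ j ∈ Finset.range k, (z - (j : ℂ))) / (k.factorial : ℂ)

lemma norm_pp_le {k : ℕ} {z : ℂ} {R : ℝ} (hz : ‖z‖ ≤ R) :
    ‖pp k z‖ ≤ (R + k) ^ k / k.factorial := by
  have hR : 0 ≤ R := le_trans (norm_nonneg z) hz
  rw [pp, norm_div]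
  have h1 : ‖((k.factorial : ℂ))‖ = (k.factorial : ℝ) := by
    simp
  rw [h1, norm_prod]
  gcongr
  calc ∏ j ∈ Finset.range k, ‖z - (j : ℂ)‖ ≤ ∏ _j ∈ Finset.range k, (R + k) := by
        apply Finset.prod_le_prod (fun j _ => norm_nonneg _)
        intro j hj
        have hj' : (j : ℝ) ≤ k := by exact_mod_cast (Finset.mem_range.mp hj).le
        calc ‖z - (j : ℂ)‖ ≤ ‖z‖ + ‖((j:ℕ) : ℂ)‖ := norm_sub_le _ _
          _ ≤ R + k := by rw [Complex.norm_natCast]; exact add_le_add hz hj'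
    _ = (R + k) ^ k := by rw [Finset.prod_const, Finset.card_range]

lemma pow_le_exp_mul_factorial (k : ℕ) :
    (k : ℝ) ^ k ≤ Real.exp 1 ^ k * k.factorial := by
  have h := Real.pow_div_factorial_le_exp (x := (k : ℝ)) (by positivity) k
  have h2 : Real.exp (k : ℝ) = Real.exp 1 ^ k := by
    rw [← Real.exp_nat_mul, mul_one]
  rw [div_le_iff₀ (by positivity), h2] at h
  linarith [h]

lemma key_term_bound {ε R : ℝ} (hε : 0 < ε) (hR : 0 ≤ R) (k : ℕ) :
    ε ^ k * ((R + k) ^ k / k.factorial) ≤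
      (2 * ε * R) ^ k / k.factorial + (2 * ε * Real.exp 1) ^ k := by
  have hfac : (0:ℝ) < k.factorial := by positivity
  have hsplit : (R + k) ^ k ≤ (2 * R) ^ k + (2 * k) ^ k := by
    rcases le_total R (k : ℝ) with h | h
    · have : (R + k) ^ k ≤ (2 * k) ^ k := by
        apply pow_le_pow_left₀ (by positivity); linarith
      have h2 : (0:ℝ) ≤ (2 * R) ^ k := by positivity
      linarith
    · have : (R + k) ^ k ≤ (2 * R) ^ k := by
        apply pow_le_pow_left₀ (by positivity); linarith
      have h2 : (0:ℝ) ≤ (2 * (k:ℝ)) ^ k := by positivity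
      linarith
  have h2k : (2 * (k:ℝ)) ^ k ≤ (2 * Real.exp 1) ^ k * k.factorial := by
    rw [mul_pow, mul_pow]
    have := pow_le_exp_mul_factorial k
    calc (2:ℝ) ^ k * (k:ℝ) ^ k ≤ 2 ^ k * (Real.exp 1 ^ k * k.factorial) := by
          apply mul_le_mul_of_nonneg_left this (by positivity)
      _ = 2 ^ k * Real.exp 1 ^ k * k.factorial := by ring
  calc ε ^ k * ((R + k) ^ k / k.factorial)
      ≤ ε ^ k * (((2 * R) ^ k + (2 * k) ^ k) / k.factorial) := by
        apply mul_le_mul_of_nonneg_left ?_ (by positivity)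
        gcongr
    _ = (2 * ε * R) ^ k / k.factorial + ε ^ k * ((2 * (k:ℝ)) ^ k / k.factorial) := by
        rw [mul_pow, mul_pow]; ring
    _ ≤ (2 * ε * R) ^ k / k.factorial + (2 * ε * Real.exp 1) ^ k := by
        have : ε ^ k * ((2 * (k:ℝ)) ^ k / k.factorial) ≤ (2 * ε * Real.exp 1) ^ k := by
          rw [← mul_div_assoc, div_le_iff₀ hfac]
          calc ε ^ k * (2 * (k:ℝ)) ^ k ≤ ε ^ k * ((2 * Real.exp 1) ^ k * k.factorial) :=
                mul_le_mul_of_nonneg_left h2k (by positivity)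
            _ = (2 * ε * Real.exp 1) ^ k * k.factorial := by
                rw [mul_pow, mul_pow, mul_pow]; ring
        linarith

section G
variable {d : ℕ → ℝ} {A ε : ℝ}

noncomputable def uu (A ε R : ℝ) (k : ℕ) : ℝ :=
  A * ((2 * ε * R) ^ k / k.factorial + (2 * ε * Real.exp 1) ^ k)

lemma summable_uu (hA : 0 < A) (hε : 0 < ε) (hεe : 2 * ε * Real.exp 1 < 1) (R : ℝ) :
    Summable (uu A ε R) := by
  apply Summable.mul_left
  exact (Real.summable_pow_div_factorial _).add
    (summable_geometric_of_lt_one (by positivity) hεe)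

lemma tsum_uu_le (hA : 0 < A) (hε : 0 < ε) (hεe : 2 * ε * Real.exp 1 ≤ 1 / 2) (hR : 0 ≤ R) :
    ∑' k, uu A ε R k ≤ 3 * A * Real.exp (2 * ε * R) := by
  have hεe' : 2 * ε * Real.exp 1 < 1 := lt_of_le_of_lt hεe (by norm_num)
  have h1 : ∑' k, ((2 * ε * R) ^ k / (k.factorial : ℝ)) = Real.exp (2 * ε * R) := by
    rw [Real.exp_eq_exp_ℝ, NormedSpace.exp_eq_tsum_div]
  have h2 : ∑' k : ℕ, (2 * ε * Real.exp 1) ^ k = (1 - 2 * ε * Real.exp 1)⁻¹ :=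
    tsum_geometric_of_lt_one (by positivity) hεe'
  have hinv : (1 - 2 * ε * Real.exp 1)⁻¹ ≤ 2 := by
    have h3 : (1:ℝ)/2 ≤ 1 - 2 * ε * Real.exp 1 := by linarith
    calc (1 - 2 * ε * Real.exp 1)⁻¹ ≤ ((1:ℝ)/2)⁻¹ := by
          apply inv_anti₀ (by norm_num) h3
      _ = 2 := by norm_num
  have hexp1 : (1:ℝ) ≤ Real.exp (2 * ε * R) := Real.one_le_exp (by positivity)
  calc ∑' k, uu A ε R k
      = A * (Real.exp (2 * ε * R) + (1 - 2 * ε * Real.exp 1)⁻¹) := by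
        simp only [uu]
        rw [tsum_mul_left, Summable.tsum_add (Real.summable_pow_div_factorial _)
          (summable_geometric_of_lt_one (by positivity) hεe'), h1, h2]
    _ ≤ 3 * A * Real.exp (2 * ε * R) := by
        nlinarith [mul_le_mul_of_nonneg_left hinv hA.le, mul_le_mul_of_nonneg_left hexp1 (by positivity : (0:ℝ) ≤ 2 * A)]

end G

section G2
variable {d : ℕ → ℝ} {A ε : ℝ}

lemma norm_term_le (hA : 0 < A) (hε : 0 < ε) (hd : ∀ k, |d k| ≤ A * ε ^ k)
    {z : ℂ} {R : ℝ} (hz : ‖z‖ ≤ R) (k : ℕ) :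
    ‖((d k : ℝ) : ℂ) * pp k z‖ ≤ uu A ε R k := by
  have hR : 0 ≤ R := le_trans (norm_nonneg z) hz
  rw [norm_mul, Complex.norm_real, Real.norm_eq_abs]
  calc |d k| * ‖pp k z‖ ≤ (A * ε ^ k) * ((R + k) ^ k / k.factorial) :=
        mul_le_mul (hd k) (norm_pp_le hz) (norm_nonneg _) (by positivity)
    _ = A * (ε ^ k * ((R + k) ^ k / k.factorial)) := by ring
    _ ≤ uu A ε R k := by
        unfold uu
        exact mul_le_mul_of_nonneg_left (key_term_bound hε hR k) hA.le

noncomputable def GG (d : ℕ → ℝ) : ℂ → ℂ := fun z => ∑' k, ((d k : ℝ) : ℂ) * pp k z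

lemma summable_term (hA : 0 < A) (hε : 0 < ε) (hεe : 2 * ε * Real.exp 1 < 1)
    (hd : ∀ k, |d k| ≤ A * ε ^ k) (z : ℂ) :
    Summable (fun k => ((d k : ℝ) : ℂ) * pp k z) :=
  Summable.of_norm_bounded (summable_uu hA hε hεe ‖z‖)
    (fun k => norm_term_le hA hε hd le_rfl k)

lemma GG_bound (hA : 0 < A) (hε : 0 < ε) (hεe : 2 * ε * Real.exp 1 ≤ 1 / 2)
    (hd : ∀ k, |d k| ≤ A * ε ^ k) (z : ℂ) :
    ‖GG d z‖ ≤ 3 * A * Real.exp (2 * ε * ‖z‖) := by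
  have hεe' : 2 * ε * Real.exp 1 < 1 := lt_of_le_of_lt hεe (by norm_num)
  have hsn : Summable (fun k => ‖((d k : ℝ) : ℂ) * pp k z‖) :=
    Summable.of_nonneg_of_le (fun k => norm_nonneg _)
      (fun k => norm_term_le hA hε hd le_rfl k) (summable_uu hA hε hεe' ‖z‖)
  calc ‖GG d z‖ ≤ ∑' k, ‖((d k : ℝ) : ℂ) * pp k z‖ := norm_tsum_le_tsum_norm hsn
    _ ≤ ∑' k, uu A ε ‖z‖ k :=
        Summable.tsum_le_tsum (fun k => norm_term_le hA hε hd le_rfl k) hsn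
          (summable_uu hA hε hεe' ‖z‖)
    _ ≤ 3 * A * Real.exp (2 * ε * ‖z‖) := tsum_uu_le hA hε hεe (norm_nonneg z)

lemma GG_diff (hA : 0 < A) (hε : 0 < ε) (hεe : 2 * ε * Real.exp 1 < 1)
    (hd : ∀ k, |d k| ≤ A * ε ^ k) : Differentiable ℂ (GG d) := by
  intro z
  set R : ℝ := ‖z‖ + 1 with hR
  have hterm : ∀ k : ℕ, DifferentiableOn ℂ (fun w : ℂ => ((d k : ℝ) : ℂ) * pp k w)
      (Metric.ball (0:ℂ) R) := by
    intro k
    apply Differentiable.differentiableOn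
    apply Differentiable.const_mul
    unfold pp
    apply Differentiable.div_const
    fun_prop
  have hdo := Complex.differentiableOn_tsum_of_summable_norm (summable_uu hA hε hεe R)
    hterm Metric.isOpen_ball
    (fun k w hw => norm_term_le hA hε hd
      (le_of_lt (by simpa [Metric.mem_ball, dist_eq_norm] using hw)) k)
  have hz : z ∈ Metric.ball (0:ℂ) R := by
    simp [Metric.mem_ball, dist_eq_norm, hR]
  exact (hdo z hz).differentiableAt (Metric.isOpen_ball.mem_nhds hz)

lemma pp_nat_eq {n k : ℕ} (h : k ≤ n) : pp k ((n : ℕ) : ℂ) = (n.choose k : ℂ) := by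
  have hprod : ∏ j ∈ Finset.range k, (((n:ℕ) : ℂ) - (j : ℂ)) = ((n.descFactorial k : ℕ) : ℂ) := by
    rw [Nat.descFactorial_eq_prod_range, Nat.cast_prod]
    apply Finset.prod_congr rfl
    intro j hj
    have : j ≤ n := le_trans (Finset.mem_range.mp hj).le h
    rw [Nat.cast_sub this]
  rw [pp, hprod, Nat.descFactorial_eq_factorial_mul_choose]
  have hfac : ((k.factorial : ℕ) : ℂ) ≠ 0 := by
    exact_mod_cast Nat.cast_ne_zero.mpr k.factorial_ne_zero
  push_cast
  field_simp

lemma pp_nat_zero {n k : ℕ} (h : n < k) : pp k ((n : ℕ) : ℂ) = 0 := by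
  rw [pp]
  rw [Finset.prod_eq_zero (Finset.mem_range.mpr h) (by simp)]
  simp

lemma pp_ofReal (k : ℕ) (t : ℝ) :
    pp k ((t : ℝ) : ℂ) = (((∏ j ∈ Finset.range k, (t - j)) / k.factorial : ℝ) : ℂ) := by
  rw [pp, Complex.ofReal_div, Complex.ofReal_prod]
  push_cast
  rfl

end G2


/-- Let `X` be a complex Banach space, `S` a bounded operator on `X`,
`x* ∈ X*` a nonzero functional and `U = {y : Re x*(y) > 0 and Re x*(S y) < 0}`. If there
is `x ∈ U` such that `liminf_k #(N_S(x,U) ∩ [0,k])/(k+1) > 0`, then `S − I` is not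
quasinilpotent, i.e. its spectral radius is nonzero. -/
theorem not_quasinilpotent_of_positive_lower_density_return_times
    {X : Type*} [NormedAddCommGroup X] [NormedSpace ℂ X] [CompleteSpace X]
    (S : X →L[ℂ] X) (f : X →L[ℂ] ℂ) (hf : f ≠ 0)
    (U : Set X) (hU : U = {y : X | 0 < (f y).re ∧ (f (S y)).re < 0})
    (x : X) (hx : x ∈ U)
    (hdens : 0 < Filter.liminf
      (fun k : ℕ => (({n : ℕ | n ≤ k ∧ (S ^ n) x ∈ U}.ncard : ℝ)) / (k + 1))
      Filter.atTop) :
    spectralRadius ℂ (S - 1) ≠ 0 := by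
  intro hrad
  set Q : X →L[ℂ] X := S - 1 with hQdef
  have hSQ : S = Q + 1 := by rw [hQdef]; abel
  -- powers of Q are eventually smaller than any ε^k
  have hQpow : ∀ ε : ℝ, 0 < ε → ∀ᶠ k : ℕ in Filter.atTop, ‖Q ^ k‖ ≤ ε ^ k := by
    intro ε hε
    have ht := spectrum.pow_nnnorm_pow_one_div_tendsto_nhds_spectralRadius Q
    rw [hrad, ENNReal.tendsto_nhds_zero] at ht
    have hε' : (0:ℝ≥0∞) < ENNReal.ofReal ε := by simp [hε]
    filter_upwards [ht (ENNReal.ofReal ε) hε', Filter.eventually_ge_atTop 1] with k hk hk1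
    have hkne : ((k:ℕ):ℝ) ≠ 0 := Nat.cast_ne_zero.mpr (by omega)
    have h1 : ((‖Q ^ k‖₊ : ℝ≥0∞)) ≤ (ENNReal.ofReal ε) ^ ((k:ℕ):ℝ) := by
      calc (‖Q ^ k‖₊ : ℝ≥0∞) = ((‖Q ^ k‖₊ : ℝ≥0∞) ^ (1/((k:ℕ):ℝ))) ^ ((k:ℕ):ℝ) := by
            rw [← ENNReal.rpow_mul, one_div, inv_mul_cancel₀ hkne, ENNReal.rpow_one]
        _ ≤ (ENNReal.ofReal ε) ^ ((k:ℕ):ℝ) := ENNReal.rpow_le_rpow hk (by positivity)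
    have h2 : (ENNReal.ofReal ε) ^ ((k:ℕ):ℝ) = ENNReal.ofReal (ε ^ k) := by
      rw [ENNReal.ofReal_rpow_of_pos hε, Real.rpow_natCast]
    rw [h2] at h1
    have h3 := ENNReal.toReal_mono (by simp) h1
    simpa [ENNReal.toReal_ofReal (by positivity : (0:ℝ) ≤ ε ^ k)] using h3
  set c : ℕ → ℂ := fun k => f ((Q ^ k) x) with hc
  set d : ℕ → ℝ := fun k => (c k).re with hdd
  -- coefficient bounds
  have habs : ∀ ε : ℝ, 0 < ε → ∃ A : ℝ, 0 < A ∧ ∀ k, |d k| ≤ A * ε ^ k := by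
    intro ε hε
    obtain ⟨K, hK⟩ := Filter.eventually_atTop.mp (hQpow ε hε)
    refine ⟨‖f‖ * ‖x‖ + (∑ j ∈ Finset.range K, |d j| / ε ^ j) + 1, by positivity, ?_⟩
    intro k
    have hbase : |d k| ≤ ‖f‖ * ‖x‖ * ‖Q ^ k‖ := by
      calc |d k| ≤ ‖c k‖ := Complex.abs_re_le_norm _
        _ = ‖f ((Q ^ k) x)‖ := rfl
        _ ≤ ‖f‖ * ‖(Q ^ k) x‖ := f.le_opNorm _
        _ ≤ ‖f‖ * (‖Q ^ k‖ * ‖x‖) :=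
            mul_le_mul_of_nonneg_left ((Q ^ k).le_opNorm x) (norm_nonneg f)
        _ = ‖f‖ * ‖x‖ * ‖Q ^ k‖ := by ring
    have hsumnn : (0:ℝ) ≤ ∑ j ∈ Finset.range K, |d j| / ε ^ j :=
      Finset.sum_nonneg (fun j _ => by positivity)
    rcases le_or_gt K k with h | h
    · calc |d k| ≤ ‖f‖ * ‖x‖ * ‖Q ^ k‖ := hbase
        _ ≤ ‖f‖ * ‖x‖ * ε ^ k := mul_le_mul_of_nonneg_left (hK k h) (by positivity)
        _ ≤ (‖f‖ * ‖x‖ + (∑ j ∈ Finset.range K, |d j| / ε ^ j) + 1) * ε ^ k := by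
            apply mul_le_mul_of_nonneg_right ?_ (by positivity)
            linarith
    · have hmem : k ∈ Finset.range K := Finset.mem_range.mpr h
      have hsingle : |d k| / ε ^ k ≤ ∑ j ∈ Finset.range K, |d j| / ε ^ j :=
        Finset.single_le_sum (f := fun j => |d j| / ε ^ j) (fun j _ => by positivity) hmem
      have hepos : (0:ℝ) < ε ^ k := by positivity
      calc |d k| = (|d k| / ε ^ k) * ε ^ k := by field_simp
        _ ≤ (∑ j ∈ Finset.range K, |d j| / ε ^ j) * ε ^ k :=
            mul_le_mul_of_nonneg_right hsingle hepos.le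
        _ ≤ (‖f‖ * ‖x‖ + (∑ j ∈ Finset.range K, |d j| / ε ^ j) + 1) * ε ^ k := by
            apply mul_le_mul_of_nonneg_right ?_ hepos.le
            have : (0:ℝ) ≤ ‖f‖ * ‖x‖ := by positivity
            linarith
  -- binomial values
  have hval : ∀ n : ℕ, (f ((S ^ n) x)).re
      = ∑ k ∈ Finset.range (n+1), (n.choose k : ℝ) * d k := by
    intro n
    have hpow : (S : X →L[ℂ] X) ^ n
        = ∑ k ∈ Finset.range (n+1), Q ^ k * 1 ^ (n-k) * (n.choose k : X →L[ℂ] X) := by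
      rw [hSQ]; exact Commute.add_pow (Commute.one_right Q) n
    rw [hpow, ContinuousLinearMap.sum_apply, map_sum, Complex.re_sum]
    apply Finset.sum_congr rfl
    intro k _
    simp only [one_pow, mul_one, ContinuousLinearMap.mul_apply,
      ContinuousLinearMap.natCast_apply, ContinuousLinearMap.one_apply]
    rw [map_nsmul, map_nsmul, nsmul_eq_mul]
    simp [Complex.mul_re, hdd, hc]
  -- density constant
  have hbdd : Filter.IsBoundedUnder (· ≥ ·) Filter.atTop
      (fun k : ℕ => (({n : ℕ | n ≤ k ∧ (S ^ n) x ∈ U}.ncard : ℝ)) / (k + 1)) :=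
    ⟨0, Filter.eventually_map.mpr (Filter.Eventually.of_forall fun k => by positivity)⟩
  set L := Filter.liminf
      (fun k : ℕ => (({n : ℕ | n ≤ k ∧ (S ^ n) x ∈ U}.ncard : ℝ)) / (k + 1))
      Filter.atTop with hL
  set δ : ℝ := L / 2 with hδ
  have hδpos : 0 < δ := by rw [hδ]; linarith
  have hev1 : ∀ᶠ k : ℕ in Filter.atTop,
      δ < (({n : ℕ | n ≤ k ∧ (S ^ n) x ∈ U}.ncard : ℝ)) / (k + 1) :=
    Filter.eventually_lt_of_lt_liminf (by rw [hδ]; linarith) hbdd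
  -- choice of ε and A
  have hlog3 : 0 < Real.log 3 := Real.log_pos (by norm_num)
  set ε : ℝ := min (δ * Real.log 3 / 32) (1 / (8 * Real.exp 1)) with hε
  have hεpos : 0 < ε := by
    apply lt_min (by positivity)
    positivity
  have hεe2 : 2 * ε * Real.exp 1 ≤ 1 / 2 := by
    have h1 : ε ≤ 1 / (8 * Real.exp 1) := min_le_right _ _
    have h2 : (0:ℝ) < Real.exp 1 := Real.exp_pos 1
    calc 2 * ε * Real.exp 1 ≤ 2 * (1 / (8 * Real.exp 1)) * Real.exp 1 := by
          apply mul_le_mul_of_nonneg_right ?_ h2.le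
          linarith
      _ = 1 / 4 := by field_simp; ring
      _ ≤ 1 / 2 := by norm_num
  have hεe1 : 2 * ε * Real.exp 1 < 1 := lt_of_le_of_lt hεe2 (by norm_num)
  obtain ⟨A, hA, hdA⟩ := habs ε hεpos
  set G : ℂ → ℂ := GG d with hG
  have hGdiff : Differentiable ℂ G := GG_diff hA hεpos hεe1 hdA
  have hGbound : ∀ z : ℂ, ‖G z‖ ≤ 3 * A * Real.exp (2 * ε * ‖z‖) :=
    fun z => GG_bound hA hεpos hεe2 hdA z
  have hsumm : ∀ z : ℂ, Summable (fun k => ((d k : ℝ) : ℂ) * pp k z) :=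
    fun z => summable_term hA hεpos hεe1 hdA z
  -- values at natural numbers
  have hGnat : ∀ n : ℕ, G ((n : ℕ) : ℂ) = (((f ((S ^ n) x)).re : ℝ) : ℂ) := by
    intro n
    have hv : G ((n:ℕ):ℂ) = ∑ k ∈ Finset.range (n+1), ((d k : ℝ) : ℂ) * pp k ((n:ℕ):ℂ) := by
      apply tsum_eq_sum
      intro k hk
      have hnk : n < k := by rw [Finset.mem_range] at hk; omega
      rw [pp_nat_zero hnk, mul_zero]
    rw [hv, hval n, Complex.ofReal_sum]
    apply Finset.sum_congr rfl
    intro k hk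
    rw [pp_nat_eq (Nat.lt_succ_iff.mp (Finset.mem_range.mp hk))]
    push_cast
    ring
  -- imaginary part vanishes on the reals
  have hGreal : ∀ tt : ℝ, (G ((tt:ℝ):ℂ)).im = 0 := by
    intro tt
    have h := ContinuousLinearMap.map_tsum Complex.imCLM (hsumm ((tt:ℝ):ℂ))
    have hterms : ∀ k : ℕ, (((d k : ℝ):ℂ) * pp k ((tt:ℝ):ℂ)).im = 0 := by
      intro k
      rw [pp_ofReal, ← Complex.ofReal_mul]
      exact Complex.ofReal_im _
    calc (G ((tt:ℝ):ℂ)).im = ∑' k, (((d k : ℝ):ℂ) * pp k ((tt:ℝ):ℂ)).im := by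
          simpa [hG, GG] using h
      _ = 0 := by
          rw [tsum_congr hterms, tsum_zero]
  -- the real restriction and its zeros
  have hgcont : Continuous (fun tt : ℝ => (G ((tt : ℝ) : ℂ)).re) :=
    Complex.continuous_re.comp ((hGdiff.continuous).comp Complex.continuous_ofReal)
  have hzero : ∀ n : ℕ, ∃ tt : ℝ, (S ^ n) x ∈ U →
      ((n:ℝ) < tt ∧ tt < (n:ℝ) + 1 ∧ G ((tt : ℝ) : ℂ) = 0) := by
    intro n
    by_cases hn : (S ^ n) x ∈ U
    · have hmem := hn
      rw [hU] at hmem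
      obtain ⟨h1, h2⟩ := hmem
      have hS1 : (S ^ (n+1)) x = S ((S ^ n) x) := by
        rw [pow_succ']; rfl
      have hgn : 0 < (fun tt : ℝ => (G ((tt:ℝ):ℂ)).re) ((n:ℕ):ℝ) := by
        show 0 < (G ((((n:ℕ):ℝ)) : ℂ)).re
        rw [Complex.ofReal_natCast, hGnat n, Complex.ofReal_re]
        exact h1
      have hgn1 : (fun tt : ℝ => (G ((tt:ℝ):ℂ)).re) (((n:ℕ):ℝ)+1) < 0 := by
        show (G (((((n:ℕ):ℝ))+1 : ℝ) : ℂ)).re < 0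
        have hcast : (((((n:ℕ):ℝ))+1 : ℝ) : ℂ) = (((n+1 : ℕ)) : ℂ) := by push_cast; ring
        rw [hcast, hGnat (n+1), Complex.ofReal_re, hS1]
        exact h2
      have h0mem : (0:ℝ) ∈ Set.Ioo ((fun tt : ℝ => (G ((tt:ℝ):ℂ)).re) (((n:ℕ):ℝ)+1))
          ((fun tt : ℝ => (G ((tt:ℝ):ℂ)).re) ((n:ℕ):ℝ)) := ⟨hgn1, hgn⟩
      have hIVT := intermediate_value_Ioo' (by linarith : ((n:ℕ):ℝ) ≤ ((n:ℕ):ℝ)+1)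
        hgcont.continuousOn h0mem
      obtain ⟨tt, htt, htt0⟩ := hIVT
      refine ⟨tt, fun _ => ⟨htt.1, htt.2, ?_⟩⟩
      apply Complex.ext
      · simpa using htt0
      · simpa using hGreal tt
    · exact ⟨0, fun h => absurd h hn⟩
  choose t ht using hzero
  -- initial value
  have hd0 : d 0 = (f x).re := by
    simp [hdd, hc, pow_zero, ContinuousLinearMap.one_apply]
  have hd0pos : 0 < d 0 := by
    rw [hd0]
    rw [hU] at hx
    exact hx.1
  have hG0 : G 0 = ((d 0 : ℝ) : ℂ) := by
    have h0 : (0:ℂ) = (((0:ℕ)):ℂ) := by simp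
    rw [h0, hGnat 0, hd0]
    norm_num
  have hG0norm : ‖G 0‖ = d 0 := by
    rw [hG0, Complex.norm_real, Real.norm_eq_abs, abs_of_pos hd0pos]
  -- second eventual estimate
  have hev2 : ∀ᶠ k : ℕ in Filter.atTop,
      3 * A < d 0 * Real.exp (δ * ((k:ℝ)+1) * Real.log 3 / 2) := by
    have htend : Filter.Tendsto (fun k : ℕ => δ * ((k:ℝ)+1) * Real.log 3 / 2)
        Filter.atTop Filter.atTop := by
      apply Filter.Tendsto.atTop_div_const (by norm_num : (0:ℝ) < 2)
      apply Filter.Tendsto.atTop_mul_const hlog3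
      apply Filter.Tendsto.const_mul_atTop hδpos
      exact Filter.tendsto_atTop_add_const_right _ 1 tendsto_natCast_atTop_atTop
    filter_upwards [htend.eventually_gt_atTop (Real.log (3 * A / d 0))] with k hk
    have hpos : 0 < 3 * A / d 0 := by positivity
    have := Real.exp_lt_exp.mpr hk
    rw [Real.exp_log hpos] at this
    rw [div_lt_iff₀ hd0pos] at this
    linarith
  obtain ⟨k, hk1, hk2⟩ := (hev1.and hev2).exists
  -- the finite set of return times up to k
  have hfin : {n : ℕ | n ≤ k ∧ (S ^ n) x ∈ U}.Finite :=
    Set.Finite.subset (Set.finite_Iic k) (fun n hn => hn.1)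
  set F : Finset ℕ := hfin.toFinset with hF
  have hmemF : ∀ n, n ∈ F ↔ (n ≤ k ∧ (S ^ n) x ∈ U) := fun n => hfin.mem_toFinset
  have hFcard : ({n : ℕ | n ≤ k ∧ (S ^ n) x ∈ U}.ncard : ℝ) = (F.card : ℝ) := by
    rw [Set.ncard_eq_toFinset_card _ hfin]
  have hδk : δ * ((k:ℝ)+1) < (F.card : ℝ) := by
    rw [hFcard] at hk1
    have hkpos : (0:ℝ) < (k:ℝ) + 1 := by positivity
    rw [lt_div_iff₀ hkpos] at hk1
    linarith
  -- properties of the chosen zeros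
  have htF : ∀ n ∈ F, (n:ℝ) < t n ∧ t n < (n:ℝ) + 1 ∧ G ((t n : ℝ) : ℂ) = 0 := by
    intro n hn
    exact ht n ((hmemF n).mp hn).2
  -- the finset of zeros
  set s : Finset ℂ := F.image (fun n => ((t n : ℝ) : ℂ)) with hsdef
  have hscard : s.card = F.card := by
    apply Finset.card_image_of_injOn
    have hmono : ∀ a ∈ F, ∀ b ∈ F, a < b → t a < t b := by
      intro a ha b hb hab
      have h1 := htF a ha
      have h2 := htF b hb
      have : (a:ℝ) + 1 ≤ (b:ℝ) := by exact_mod_cast Nat.succ_le_of_lt hab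
      linarith [h1.2.1, h2.1]
    intro a ha b hb hab
    simp only [Finset.coe_mem] at *
    have hta : t a = t b := by exact_mod_cast hab
    by_contra hne
    rcases Nat.lt_or_ge a b with h | h
    · have := hmono a ha b hb h; linarith
    · have hba : b < a := lt_of_le_of_ne h (fun e => hne e.symm)
      have := hmono b hb a ha hba; linarith
  set R : ℝ := (k:ℝ) + 2 with hR
  have hRpos : 0 < R := by rw [hR]; positivity
  have hszero : ∀ w ∈ s, G w = 0 ∧ ‖w‖ ≤ R := by
    intro w hw
    rw [hsdef, Finset.mem_image] at hw
    obtain ⟨n, hn, rfl⟩ := hw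
    obtain ⟨h1, h2, h3⟩ := htF n hn
    have hnk : (n:ℝ) ≤ (k:ℝ) := by exact_mod_cast ((hmemF n).mp hn).1
    refine ⟨h3, ?_⟩
    rw [Complex.norm_real, Real.norm_eq_abs]
    rw [abs_of_pos (lt_of_le_of_lt (Nat.cast_nonneg n) h1)]
    rw [hR]; linarith
  have hMb : ∀ z : ℂ, ‖z‖ ≤ 4 * R → ‖G z‖ ≤ 3 * A * Real.exp (2 * ε * (4 * R)) := by
    intro z hz
    calc ‖G z‖ ≤ 3 * A * Real.exp (2 * ε * ‖z‖) := hGbound z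
      _ ≤ 3 * A * Real.exp (2 * ε * (4 * R)) := by
          apply mul_le_mul_of_nonneg_left ?_ (by positivity)
          apply Real.exp_le_exp.mpr
          apply mul_le_mul_of_nonneg_left hz (by positivity)
  have hcount := zero_count hRpos s.card G (3 * A * Real.exp (2 * ε * (4 * R)))
    hGdiff s rfl hszero hMb
  rw [hG0norm] at hcount
  -- final contradiction
  set u : ℝ := δ * ((k:ℝ)+1) * Real.log 3 / 2 with hu
  have h8 : 2 * ε * (4 * R) ≤ u := by
    have h1 : ε ≤ δ * Real.log 3 / 32 := min_le_left _ _
    have hR2 : R ≤ 2 * ((k:ℝ)+1) := by rw [hR]; push_cast; linarith [(Nat.cast_nonneg k : (0:ℝ) ≤ (k:ℝ))]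
    calc 2 * ε * (4 * R) = 8 * ε * R := by ring
      _ ≤ 8 * (δ * Real.log 3 / 32) * R := by
          apply mul_le_mul_of_nonneg_right ?_ hRpos.le
          linarith
      _ ≤ 8 * (δ * Real.log 3 / 32) * (2 * ((k:ℝ)+1)) := by
          apply mul_le_mul_of_nonneg_left hR2 (by positivity)
      _ = u := by rw [hu]; ring
  have hcount2 : d 0 * 3 ^ s.card ≤ 3 * A * Real.exp u := by
    calc d 0 * 3 ^ s.card ≤ 3 * A * Real.exp (2 * ε * (4 * R)) := hcount
      _ ≤ 3 * A * Real.exp u := by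
          apply mul_le_mul_of_nonneg_left (Real.exp_le_exp.mpr h8) (by positivity)
  have hstrict : d 0 * 3 ^ s.card < d 0 * Real.exp (u + u) := by
    have hexpu : 0 < Real.exp u := Real.exp_pos u
    calc d 0 * 3 ^ s.card ≤ 3 * A * Real.exp u := hcount2
      _ < (d 0 * Real.exp u) * Real.exp u := by
          apply mul_lt_mul_of_pos_right hk2 hexpu
      _ = d 0 * Real.exp (u + u) := by rw [Real.exp_add]; ring
  have hge : d 0 * Real.exp (u + u) ≤ d 0 * 3 ^ s.card := by
    have h2u : u + u = δ * ((k:ℝ)+1) * Real.log 3 := by rw [hu]; ring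
    have hcard : δ * ((k:ℝ)+1) ≤ (s.card : ℝ) := by
      rw [hscard]; linarith
    have hexp3 : Real.exp (u + u) ≤ (3:ℝ) ^ s.card := by
      have h3 : ((3:ℝ)) ^ s.card = Real.exp ((s.card : ℝ) * Real.log 3) := by
        rw [Real.exp_nat_mul, Real.exp_log (by norm_num : (0:ℝ) < 3)]
      rw [h3, h2u]
      apply Real.exp_le_exp.mpr
      apply mul_le_mul_of_nonneg_right hcard hlog3.le
    apply mul_le_mul_of_nonneg_left hexp3 hd0pos.le
  linarith
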